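/- Let H ≤ G1 × G2 × G3 be a subgroup, S1, S2, S3 defined as in Proposition 1 (S1 = {τ1 : ∃τ, H(τ1, τ, 1) and ∃τ, H(τ1, 1, τ)}, etc.), and suppose (π1, π2, π3) ∉ H but each coordinate of (π1, π2, π3) can be corrected inside H (i.e., ∃τ with (τ, π2, π3) ∈ H, and similarly for the other coordinates). Then with τ1 = τ⁻¹π1 (for the witness τ with (τ, π2, π3) ∈ H), we have τ1 ∈ S1 and (τ1, 1, 1) ∉ H; in particular H ∩ (S1 × S2 × S3) is a proper subgroup of S1 × S2 × S3. -/

import Mathlib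

/-- Key step for condition (1) of the almost-direct product: with
`(π1, π2, π3) ∉ H` correctable in each coordinate and `(τ, π2, π3) ∈ H`,
the element `τ1 = τ⁻¹ * π1` lies in `S1` but `(τ1, 1, 1) ∉ H`; in particular
`H ∩ (S1 × S2 × S3)` is a proper subgroup of `S1 × S2 × S3`. -/
theorem proper_subgroup_step
    {G1 G2 G3 : Type*} [Group G1] [Group G2] [Group G3]
    (H : Subgroup (G1 × G2 × G3)) (π1 : G1) (π2 : G2) (π3 : G3) (τ : G1)
    (hnot : ((π1, π2, π3) : G1 × G2 × G3) ∉ H)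
    (hτ : ((τ, π2, π3) : G1 × G2 × G3) ∈ H)
    (e2 : ∃ τ' : G2, ((π1, τ', π3) : G1 × G2 × G3) ∈ H)
    (e3 : ∃ τ'' : G3, ((π1, π2, τ'') : G1 × G2 × G3) ∈ H) :
    let S1 : Set G1 := {t | (∃ σ : G2, ((t, σ, 1) : G1 × G2 × G3) ∈ H) ∧
      (∃ σ : G3, ((t, 1, σ) : G1 × G2 × G3) ∈ H)}
    let S2 : Set G2 := {t | (∃ σ : G1, ((σ, t, 1) : G1 × G2 × G3) ∈ H) ∧
      (∃ σ : G3, ((1, t, σ) : G1 × G2 × G3) ∈ H)}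
    let S3 : Set G3 := {t | (∃ σ : G1, ((σ, 1, t) : G1 × G2 × G3) ∈ H) ∧
      (∃ σ : G2, ((1, σ, t) : G1 × G2 × G3) ∈ H)}
    let τ1 : G1 := τ⁻¹ * π1
    τ1 ∈ S1 ∧ ((τ1, 1, 1) : G1 × G2 × G3) ∉ H ∧
      ({x : G1 × G2 × G3 | x ∈ H ∧ x.1 ∈ S1 ∧ x.2.1 ∈ S2 ∧ x.2.2 ∈ S3}
        ≠ {x : G1 × G2 × G3 | x.1 ∈ S1 ∧ x.2.1 ∈ S2 ∧ x.2.2 ∈ S3}) := by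
  intro S1 S2 S3 τ1
  obtain ⟨τ', hτ'⟩ := e2
  obtain ⟨τ'', hτ''⟩ := e3
  have h12 : ((τ⁻¹ * π1, π2⁻¹ * τ', (1 : G3)) : G1 × G2 × G3) ∈ H := by
    have := H.mul_mem (H.inv_mem hτ) hτ'
    simpa [Prod.ext_iff, mul_assoc] using this
  have h13 : ((τ⁻¹ * π1, (1 : G2), π3⁻¹ * τ'') : G1 × G2 × G3) ∈ H := by
    have := H.mul_mem (H.inv_mem hτ) hτ''
    simpa [Prod.ext_iff, mul_assoc] using this
  have hS1 : τ1 ∈ S1 := ⟨⟨π2⁻¹ * τ', h12⟩, ⟨π3⁻¹ * τ'', h13⟩⟩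
  have hnotin : ((τ1, 1, 1) : G1 × G2 × G3) ∉ H := by
    intro hmem
    apply hnot
    have := H.mul_mem hτ hmem
    simpa [τ1, Prod.ext_iff, mul_assoc] using this
  refine ⟨hS1, hnotin, ?_⟩
  intro heq
  have h1S2 : (1 : G2) ∈ S2 := ⟨⟨1, H.one_mem⟩, ⟨1, H.one_mem⟩⟩
  have h1S3 : (1 : G3) ∈ S3 := ⟨⟨1, H.one_mem⟩, ⟨1, H.one_mem⟩⟩
  have : ((τ1, 1, 1) : G1 × G2 × G3) ∈ {x : G1 × G2 × G3 | x ∈ H ∧ x.1 ∈ S1 ∧ x.2.1 ∈ S2 ∧ x.2.2 ∈ S3} := by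
    rw [heq]; exact ⟨hS1, h1S2, h1S3⟩
  exact hnotin this.1
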